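/- Let k be a positive integer, t a positive real, and consider the Laurent expansion in z of ψ^{(t)}(y_{-k})(z) := (-z)^{-k}·Σ_{m>0} e^{zkm t}(1 - e^{zm})^{k}. Its coefficient of z^0 equals -B_{k+1}/(k+1), independently of t. -/

import Mathlib

open Filter Topology

section AuxPsi

open Finset Nat


private lemma two_pow_le_factorial (j : ℕ) : 2 ^ j ≤ (j + 1)! := by
  induction j with
  | zero => simp
  | succ n ih =>
    calc 2 ^ (n+1) = 2 ^ n * 2 := by ring
    _ ≤ (n+1)! * 2 := Nat.mul_le_mul_right _ ih
    _ ≤ (n+1)! * (n+2) := Nat.mul_le_mul_left _ (by omega)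
    _ = (n+2)! := by rw [Nat.factorial_succ (n+1)]; ring

private lemma sum_inv_fact_le (n : ℕ) : ∑ j ∈ range n, (((j+2)! : ℚ))⁻¹ ≤ 1 := by
  have h1 : ∀ j : ℕ, (((j+2)! : ℚ))⁻¹ ≤ (1/2 : ℚ)^(j+1) := by
    intro j
    rw [div_pow, one_pow, one_div]
    apply inv_anti₀ (by positivity)
    exact_mod_cast two_pow_le_factorial (j+1)
  calc ∑ j ∈ range n, (((j+2)! : ℚ))⁻¹ ≤ ∑ j ∈ range n, (1/2 : ℚ)^(j+1) :=
        sum_le_sum fun j _ => h1 j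
    _ = (1/2) * ∑ j ∈ range n, (1/2 : ℚ)^j := by rw [mul_sum]; simp [pow_succ, mul_comm]
    _ ≤ (1/2) * 2 := by
        apply mul_le_mul_of_nonneg_left _ (by norm_num)
        rw [geom_sum_eq (by norm_num : (1/2 : ℚ) ≠ 1)]
        have : (0:ℚ) ≤ (1/2:ℚ)^n := by positivity
        rw [div_le_iff_of_neg (by norm_num : (1/2 : ℚ) - 1 < 0)]
        linarith
    _ = 1 := by norm_num

private lemma choose_mul_fact_le (m : ℕ) :
    ∑ l ∈ range (m+1), ((m+2).choose l : ℚ) * l ! ≤ (m+2)! := by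
  have h1 : ∀ l ∈ range (m+1), ((m+2).choose l : ℚ) * l ! = (m+2)! * (((m+2-l)! : ℚ))⁻¹ := by
    intro l hl
    rw [Finset.mem_range] at hl
    have h := Nat.choose_mul_factorial_mul_factorial (show l ≤ m+2 by omega)
    have h2 : ((m+2).choose l : ℚ) * l ! * (m+2-l)! = (m+2)! := by exact_mod_cast congrArg Nat.cast h
    have h3 : ((m+2-l)! : ℚ) ≠ 0 := by positivity
    field_simp
    linarith [h2]
  rw [Finset.sum_congr rfl h1, ← Finset.mul_sum]
  have h4 : ∑ l ∈ range (m+1), (((m+2-l)! : ℚ))⁻¹ = ∑ j ∈ range (m+1), (((j+2)! : ℚ))⁻¹ := by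
    rw [← Finset.sum_range_reflect]
    apply Finset.sum_congr rfl
    intro j hj
    rw [Finset.mem_range] at hj
    have h6 : m + 2 - (m + 1 - 1 - j) = j + 2 := by omega
    rw [h6]
  rw [h4]
  calc (m+2)! * (∑ j ∈ range (m+1), (((j+2)! : ℚ))⁻¹) ≤ (m+2)! * 1 := by
        apply mul_le_mul_of_nonneg_left (sum_inv_fact_le _) (by positivity)
    _ = (m+2)! := mul_one _

private lemma abs_bernoulli_le : ∀ n : ℕ, |bernoulli n| ≤ (n ! : ℚ) := by
  intro n
  induction n using Nat.strong_induction_on with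
  | _ n ih =>
    match n with
    | 0 => simp
    | m+1 =>
      have hrec := sum_bernoulli (m+2)
      rw [if_neg (by omega), Finset.sum_range_succ] at hrec
      have hch : ((m+2).choose (m+1) : ℚ) = (m+2 : ℚ) := by
        rw [Nat.choose_succ_self_right]; push_cast; ring
      rw [hch] at hrec
      have hB : (m+2 : ℚ) * bernoulli (m+1) = -(∑ l ∈ range (m+1), ((m+2).choose l : ℚ) * bernoulli l) := by
        linarith [hrec]
      have habs : (m+2 : ℚ) * |bernoulli (m+1)| ≤ (m+2)! := by
        calc (m+2 : ℚ) * |bernoulli (m+1)| = |(m+2 : ℚ) * bernoulli (m+1)| := by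
              rw [abs_mul, abs_of_pos (by positivity : (0:ℚ) < (m+2:ℚ))]
          _ = |∑ l ∈ range (m+1), ((m+2).choose l : ℚ) * bernoulli l| := by rw [hB, abs_neg]
          _ ≤ ∑ l ∈ range (m+1), ((m+2).choose l : ℚ) * l ! := by
              refine (Finset.abs_sum_le_sum_abs _ _).trans (Finset.sum_le_sum fun l hl => ?_)
              rw [Finset.mem_range] at hl
              rw [abs_mul, abs_of_nonneg (by positivity : (0:ℚ) ≤ ((m+2).choose l : ℚ))]
              exact mul_le_mul_of_nonneg_left (ih l (by omega)) (by positivity)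
          _ ≤ (m+2)! := choose_mul_fact_le m
      have h5 : ((m+2)! : ℚ) = (m+2) * (m+1)! := by
        rw [Nat.factorial_succ (m+1)]; push_cast; ring
      rw [h5] at habs
      have : (0:ℚ) < (m+2:ℚ) := by positivity
      calc |bernoulli (m+1)| = ((m+2:ℚ) * |bernoulli (m+1)|)/(m+2) := by field_simp
        _ ≤ ((m+2:ℚ) * (m+1)!)/(m+2) := div_le_div_of_nonneg_right habs this.le
        _ = ((m+1)! : ℚ) := by field_simp

private lemma alt_sum_succ (k : ℕ) (g : ℕ → ℝ) :
    ∑ l ∈ range (k+2), (((k+1).choose l : ℕ) : ℝ) * (-1)^l * g l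
      = ∑ l ∈ range (k+1), ((k.choose l : ℕ) : ℝ) * (-1)^l * (g l - g (l+1)) := by
  have h2 : ∑ l ∈ range (k+1), ((k.choose (l+1) : ℕ) : ℝ) * (-1)^(l+1) * g (l+1)
      = (∑ l ∈ range (k+1), ((k.choose l : ℕ) : ℝ) * (-1)^l * g l) - g 0 := by
    have e1 := Finset.sum_range_succ' (fun l => ((k.choose l : ℕ) : ℝ) * (-1)^l * g l) (k+1)
    have e2 := Finset.sum_range_succ (fun l => ((k.choose l : ℕ) : ℝ) * (-1)^l * g l) (k+1)
    rw [e2, Nat.choose_succ_self] at e1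
    simp only [Nat.cast_zero, zero_mul, add_zero, Nat.choose_zero_right, Nat.cast_one, one_mul,
      pow_zero, mul_one, zero_add] at e1
    linarith [e1]
  rw [Finset.sum_range_succ' (fun l => (((k+1).choose l : ℕ) : ℝ) * (-1)^l * g l) (k+1)]
  have h3 : ∀ l, (((k+1).choose (l+1) : ℕ) : ℝ) = ((k.choose l : ℕ) : ℝ) + ((k.choose (l+1) : ℕ) : ℝ) := by
    intro l; rw [Nat.choose_succ_succ]; push_cast; ring
  simp only [h3, add_mul]
  rw [Finset.sum_add_distrib, h2]
  simp only [Nat.choose_zero_right, Nat.cast_one, one_mul, pow_zero, mul_one]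
  have h4 : ∀ l ∈ range (k+1), ((k.choose l : ℕ) : ℝ) * (-1)^(l+1) * g (l+1)
      = -(((k.choose l : ℕ) : ℝ) * (-1)^l * g (l+1)) := by
    intro l _; ring
  have h5 : ∑ l ∈ range (k+1), ((k.choose l : ℕ) : ℝ) * (-1)^l * (g l - g (l+1))
      = ∑ l ∈ range (k+1), ((k.choose l : ℕ) : ℝ) * (-1)^l * g l
        - ∑ l ∈ range (k+1), ((k.choose l : ℕ) : ℝ) * (-1)^l * g (l+1) := by
    rw [← Finset.sum_sub_distrib]; exact Finset.sum_congr rfl fun l _ => by ring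
  rw [Finset.sum_congr rfl h4, Finset.sum_neg_distrib, h5]
  ring

private lemma alt_sum_eq : ∀ (k n : ℕ) (c : ℝ), n ≤ k →
    ∑ l ∈ range (k+1), ((k.choose l : ℕ) : ℝ) * (-1)^l * ((l : ℝ) + c)^n
      = if n = k then (-1)^k * (k ! : ℝ) else 0 := by
  intro k
  induction k with
  | zero =>
    intro n c hn
    interval_cases n
    simp
  | succ k ih =>
    intro n c hn
    rw [show k + 1 + 1 = k + 2 from rfl, alt_sum_succ k (fun l => ((l : ℝ) + c)^n)]
    have hdiff : ∀ l : ℕ, ((l : ℝ) + c)^n - (((l+1 : ℕ) : ℝ) + c)^n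
        = -∑ m ∈ range n, (n.choose m : ℝ) * ((l : ℝ) + c)^m := by
      intro l
      have hb : (((l : ℝ) + c) + 1)^n = ∑ m ∈ range (n+1), ((l : ℝ) + c)^m * 1^(n-m) * (n.choose m) :=
        add_pow _ _ _
      rw [Finset.sum_range_succ] at hb
      simp only [one_pow, mul_one, Nat.choose_self, Nat.cast_one] at hb
      push_cast
      have h0 : ((l : ℝ) + 1 + c) = ((l : ℝ) + c) + 1 := by ring
      rw [h0, hb]
      have h1 : ∑ m ∈ range n, (n.choose m : ℝ) * ((l:ℝ)+c)^m
          = ∑ m ∈ range n, ((l:ℝ)+c)^m * (n.choose m : ℝ) :=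
        Finset.sum_congr rfl fun m _ => by ring
      rw [h1]
      ring
    simp only [hdiff]
    have hswap :
        ∑ l ∈ range (k+1), ((k.choose l : ℕ) : ℝ) * (-1)^l *
            (-∑ m ∈ range n, (n.choose m : ℝ) * ((l : ℝ) + c)^m)
          = -∑ m ∈ range n, (n.choose m : ℝ) *
              ∑ l ∈ range (k+1), ((k.choose l : ℕ) : ℝ) * (-1)^l * ((l : ℝ) + c)^m := by
      have e1 : ∀ l ∈ range (k+1), ((k.choose l : ℕ) : ℝ) * (-1)^l *
            (-∑ m ∈ range n, (n.choose m : ℝ) * ((l : ℝ) + c)^m)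
          = ∑ m ∈ range n, -((n.choose m : ℝ) * (((k.choose l : ℕ) : ℝ) * (-1)^l * ((l : ℝ) + c)^m)) := by
        intro l _
        rw [mul_neg, Finset.mul_sum, ← Finset.sum_neg_distrib]
        exact Finset.sum_congr rfl fun m _ => by ring
      rw [Finset.sum_congr rfl e1, Finset.sum_comm, ← Finset.sum_neg_distrib]
      exact Finset.sum_congr rfl fun m _ => by
        rw [Finset.mul_sum, ← Finset.sum_neg_distrib]
    rw [hswap]
    have hIH : ∀ m ∈ range n, (n.choose m : ℝ) *
          (∑ l ∈ range (k+1), ((k.choose l : ℕ) : ℝ) * (-1)^l * ((l : ℝ) + c)^m)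
        = (n.choose m : ℝ) * (if m = k then (-1)^k * (k ! : ℝ) else 0) := by
      intro m hm
      rw [Finset.mem_range] at hm
      rw [ih m c (by omega)]
    rw [Finset.sum_congr rfl hIH]
    by_cases hcase : n = k + 1
    · subst hcase
      rw [if_pos rfl]
      simp only [mul_ite, mul_zero]
      rw [Finset.sum_ite_eq' (range (k+1)) k]
      rw [if_pos (Finset.mem_range.mpr (by omega))]
      rw [Nat.choose_succ_self_right]
      rw [Nat.factorial_succ k]
      push_cast
      ring
    · rw [if_neg hcase]
      have hz : ∀ m ∈ range n, (n.choose m : ℝ) * (if m = k then (-1)^k * (k ! : ℝ) else 0) = 0 := by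
        intro m hm
        rw [Finset.mem_range] at hm
        rw [if_neg (by omega)]
        ring
      rw [Finset.sum_congr rfl hz, Finset.sum_const_zero, neg_zero]

private lemma tsum_pnat_geom {r : ℝ} (h0 : 0 ≤ r) (h1 : r < 1) :
    ∑' m : ℕ+, r ^ (m : ℕ) = r / (1 - r) := by
  rw [← Equiv.pnatEquivNat.symm.tsum_eq (fun m : ℕ+ => r ^ (m : ℕ))]
  have h2 : ∀ n : ℕ, r ^ ((Equiv.pnatEquivNat.symm n : ℕ+) : ℕ) = r * r ^ n := by
    intro n
    simp [Equiv.pnatEquivNat, Nat.succPNat, pow_succ, mul_comm]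
  rw [tsum_congr h2, tsum_mul_left, tsum_geometric_of_lt_one h0 h1, div_eq_mul_inv]

private lemma summable_pnat_geom {r : ℝ} (h0 : 0 ≤ r) (h1 : r < 1) (c : ℝ) :
    Summable (fun m : ℕ+ => c * r ^ (m : ℕ)) := by
  apply Summable.mul_left
  exact ((summable_geometric_of_lt_one h0 h1).subtype _)

private lemma exp_sub_one_eq (x : ℝ) : Real.exp x - 1 = ∑' n : ℕ, x^(n+1)/(n+1)! := by
  have h1 : Real.exp x = ∑' n : ℕ, x^n/n ! := by
    rw [Real.exp_eq_exp_ℝ, NormedSpace.exp_eq_tsum_div]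
  rw [h1, Summable.tsum_eq_zero_add (Real.summable_pow_div_factorial x)]
  simp

private lemma abs_bernoulli_real (n : ℕ) : |(bernoulli n : ℝ)| ≤ (n ! : ℝ) := by
  have := abs_bernoulli_le n
  exact_mod_cast (by exact_mod_cast this : |((bernoulli n : ℚ) : ℝ)| ≤ ((n ! : ℚ) : ℝ))

private lemma abs_bser_le (n : ℕ) : |(bernoulli n : ℝ) / n !| ≤ 1 := by
  rw [abs_div, abs_of_pos (by positivity : (0:ℝ) < (n ! : ℝ))]
  rw [div_le_one (by positivity)]
  exact abs_bernoulli_real n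

private lemma summable_bser_norm {x : ℝ} (hx : |x| < 1) :
    Summable (fun n : ℕ => ‖(bernoulli n : ℝ) / n ! * x^n‖) := by
  apply Summable.of_nonneg_of_le (fun n => norm_nonneg _) (fun n => ?_)
    (summable_geometric_of_lt_one (abs_nonneg x) hx)
  rw [Real.norm_eq_abs, abs_mul, abs_pow]
  calc |(bernoulli n : ℝ) / n !| * |x|^n ≤ 1 * |x|^n := by
        exact mul_le_mul_of_nonneg_right (abs_bser_le n) (by positivity)
    _ = |x|^n := one_mul _

private lemma bser_mul_exp {x : ℝ} (hx : |x| < 1) :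
    (∑' n : ℕ, (bernoulli n : ℝ) / n ! * x^n) * (Real.exp x - 1) = x := by
  have hg : Summable (fun n : ℕ => ‖x^(n+1)/(n+1)!‖) := by
    apply Summable.congr ((summable_nat_add_iff 1).mpr (Real.summable_pow_div_factorial |x|))
    intro n
    rw [Real.norm_eq_abs, abs_div, abs_pow, abs_of_pos (by positivity : (0:ℝ) < ((n+1)! : ℝ))]
  rw [exp_sub_one_eq, tsum_mul_tsum_eq_tsum_sum_antidiagonal_of_summable_norm
    (summable_bser_norm hx) hg]
  have hinner : ∀ n : ℕ, ∑ kl ∈ Finset.HasAntidiagonal.antidiagonal n,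
      ((bernoulli kl.1 : ℝ) / kl.1 ! * x^kl.1) * (x^(kl.2+1)/(kl.2+1)!)
      = if n = 0 then x else 0 := by
    intro n
    rw [Finset.Nat.sum_antidiagonal_eq_sum_range_succ_mk]
    have hterm : ∀ i ∈ range (n+1),
        ((bernoulli i : ℝ) / i ! * x^i) * (x^((n-i)+1)/((n-i)+1)!)
        = x^(n+1)/(n+1)! * ((((n+1).choose i : ℕ) : ℝ) * (bernoulli i : ℝ)) := by
      intro i hi
      rw [Finset.mem_range] at hi
      have hi' : i ≤ n := by omega
      have e1 : (n-i)+1 = n+1-i := by omega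
      rw [e1]
      have hxp : x^i * x^(n+1-i) = x^(n+1) := by rw [← pow_add]; congr 1; omega
      have hfact : (((n+1).choose i : ℕ) : ℝ) * (i ! : ℝ) * ((n+1-i)! : ℝ) = ((n+1)! : ℝ) := by
        exact_mod_cast congrArg (Nat.cast : ℕ → ℝ)
          (Nat.choose_mul_factorial_mul_factorial (show i ≤ n+1 by omega))
      have h2 : (0:ℝ) < (i ! : ℝ) := by positivity
      have h3 : (0:ℝ) < ((n+1-i)! : ℝ) := by positivity
      have h4 : (0:ℝ) < ((n+1)! : ℝ) := by positivity
      field_simp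
      rw [← hxp]
      linear_combination (-(bernoulli i : ℝ)) * x^i * x^(n+1-i) * hfact
    rw [Finset.sum_congr rfl hterm, ← Finset.mul_sum]
    have hsum : ∑ i ∈ range (n+1), ((((n+1).choose i : ℕ) : ℝ) * (bernoulli i : ℝ))
        = if n = 0 then 1 else 0 := by
      have := sum_bernoulli (n+1)
      have hcast : ((∑ i ∈ range (n+1), ((n+1).choose i : ℚ) * bernoulli i : ℚ) : ℝ)
          = ∑ i ∈ range (n+1), ((((n+1).choose i : ℕ) : ℝ) * (bernoulli i : ℝ)) := by
        push_cast
        rfl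
      rw [this] at hcast
      rw [← hcast]
      by_cases h : n = 0 <;> simp [h]
    rw [hsum]
    by_cases h : n = 0 <;> simp [h]
  rw [tsum_congr hinner, tsum_eq_single 0 (fun b hb => by simp [hb])]
  simp

private lemma summable_psi_norm {y : ℝ} (hy : |y| < 1) :
    Summable (fun n : ℕ => ‖(bernoulli (n+1) : ℝ) / (n+1)! * y^n‖) := by
  apply Summable.of_nonneg_of_le (fun n => norm_nonneg _) (fun n => ?_)
    (summable_geometric_of_lt_one (abs_nonneg y) hy)
  rw [Real.norm_eq_abs, abs_mul, abs_pow]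
  calc |(bernoulli (n+1) : ℝ) / (n+1)!| * |y|^n ≤ 1 * |y|^n :=
        mul_le_mul_of_nonneg_right (abs_bser_le (n+1)) (by positivity)
    _ = |y|^n := one_mul _

private lemma psi_repr {x : ℝ} (h0 : 0 < x) (h1 : x < 1) :
    (Real.exp x - 1)⁻¹ = x⁻¹ + ∑' n : ℕ, (bernoulli (n+1) : ℝ)/(n+1)! * x^n := by
  have hax : |x| < 1 := by rw [abs_of_pos h0]; exact h1
  have hexp : (1:ℝ) < Real.exp x := by
    rw [← Real.exp_zero]; exact Real.exp_lt_exp.mpr h0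
  have hne : Real.exp x - 1 ≠ 0 := by linarith
  have hPhi : ∑' n : ℕ, (bernoulli n : ℝ) / n ! * x^n
      = 1 + x * ∑' n : ℕ, (bernoulli (n+1) : ℝ)/(n+1)! * x^n := by
    rw [Summable.tsum_eq_zero_add (summable_bser_norm hax).of_norm]
    congr 1
    · norm_num
    · rw [← tsum_mul_left]
      exact tsum_congr fun n => by rw [pow_succ]; push_cast; ring
  have hmul := bser_mul_exp hax
  rw [hPhi] at hmul
  have hxne : x ≠ 0 := ne_of_gt h0
  set S := ∑' n : ℕ, (bernoulli (n+1) : ℝ)/(n+1)! * x^n with hS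
  have h6 : x⁻¹ * (1 + x * S) = x⁻¹ + S := by
    rw [mul_add, mul_one, inv_mul_cancel_left₀ hxne]
  have key : (x⁻¹ + S) * (Real.exp x - 1) = 1 := by
    rw [← h6, mul_assoc, hmul, inv_mul_cancel₀ hxne]
  exact inv_eq_of_mul_eq_one_left key

private lemma geom_to_inv {u : ℝ} (hu : 0 < u) :
    Real.exp (-u) / (1 - Real.exp (-u)) = (Real.exp u - 1)⁻¹ := by
  have he : 1 < Real.exp u := by rw [← Real.exp_zero]; exact Real.exp_lt_exp.mpr hu
  have h2 : Real.exp u ≠ 0 := by positivity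
  have h3 : 1 - (Real.exp u)⁻¹ = (Real.exp u - 1)/Real.exp u := by field_simp
  rw [Real.exp_neg, h3, div_div_eq_mul_div, inv_mul_cancel₀ h2, one_div]

private lemma tsum_eval (k : ℕ) (t z : ℝ) (hkt : 0 < (k:ℝ) * t) (hz : z < 0) :
    ∑' m : ℕ+, Real.exp (z * k * m * t) * (1 - Real.exp (z * m)) ^ k
      = ∑ l ∈ Finset.range (k+1), ((k.choose l : ℕ) : ℝ) * (-1)^l *
          (Real.exp ((-z) * ((l:ℝ) + k*t)) - 1)⁻¹ := by
  have hal : ∀ l : ℕ, 0 < (l:ℝ) + k*t := fun l =>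
    add_pos_of_nonneg_of_pos (Nat.cast_nonneg l) hkt
  have hr0 : ∀ l : ℕ, 0 < Real.exp (z * ((l:ℝ) + k*t)) := fun l => Real.exp_pos _
  have hr1 : ∀ l : ℕ, Real.exp (z * ((l:ℝ) + k*t)) < 1 := by
    intro l
    rw [← Real.exp_zero]
    apply Real.exp_lt_exp.mpr
    exact mul_neg_of_neg_of_pos hz (hal l)
  have hA1 : ∀ m : ℕ+, Real.exp (z * k * m * t) * (1 - Real.exp (z * m)) ^ k
      = ∑ l ∈ Finset.range (k+1),
          ((k.choose l : ℕ) : ℝ) * (-1)^l * (Real.exp (z * ((l:ℝ) + k*t)))^((m:ℕ)) := by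
    intro m
    have hb : (1 - Real.exp (z * m)) = (-Real.exp (z * m) + 1) := by ring
    rw [hb, add_pow, Finset.mul_sum]
    refine Finset.sum_congr rfl fun l hl => ?_
    rw [Finset.mem_range] at hl
    have h1 : (-Real.exp (z * ↑m))^l = (-1)^l * Real.exp (z * ↑m)^l := by
      rw [neg_pow]
    have h2 : Real.exp (z * ↑m)^l = Real.exp ((l:ℝ) * (z * ↑m)) := (Real.exp_nat_mul _ l).symm
    have h3 : (Real.exp (z * ((l:ℝ) + k*t)))^((m:ℕ))
        = Real.exp (((m:ℕ):ℝ) * (z * ((l:ℝ) + k*t))) := (Real.exp_nat_mul _ _).symm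
    rw [h1, h2, h3, one_pow, mul_one]
    have h4 : Real.exp (z * ↑k * ↑m * t) * Real.exp ((l:ℝ) * (z * ↑m))
        = Real.exp (((m:ℕ):ℝ) * (z * ((l:ℝ) + k*t))) := by
      rw [← Real.exp_add]
      congr 1
      have : ((m:ℕ):ℝ) = (m:ℝ) := rfl
      rw [this]
      ring
    rw [← h4]
    ring
  rw [tsum_congr hA1]
  rw [Summable.tsum_finsetSum (fun l _ => by
    have := summable_pnat_geom (le_of_lt (hr0 l)) (hr1 l) (((k.choose l : ℕ) : ℝ) * (-1)^l)
    simpa [mul_assoc] using this)]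
  refine Finset.sum_congr rfl fun l hl => ?_
  rw [tsum_mul_left, tsum_pnat_geom (le_of_lt (hr0 l)) (hr1 l)]
  have h7 := geom_to_inv (u := (-z)*((l:ℝ)+k*t)) (mul_pos (neg_pos.mpr hz) (hal l))
  rw [show -((-z) * ((l:ℝ)+k*t)) = z * ((l:ℝ)+k*t) by ring] at h7
  rw [← h7]

private lemma psi_sum (k : ℕ) (t w : ℝ) (hkt : 0 < (k:ℝ) * t) (hw : 0 < w)
    (hW : ((k:ℝ) + k*t) * w < 1) :
    ∑ l ∈ Finset.range (k+1), ((k.choose l : ℕ) : ℝ) * (-1)^l *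
        (Real.exp (w * ((l:ℝ) + k*t)) - 1)⁻¹
      = (∑ l ∈ Finset.range (k+1), ((k.choose l : ℕ) : ℝ) * (-1)^l * (w * ((l:ℝ) + k*t))⁻¹)
        + ∑' n : ℕ, ((bernoulli (n+1) : ℝ)/(n+1)! *
            (∑ l ∈ Finset.range (k+1), ((k.choose l : ℕ) : ℝ) * (-1)^l * ((l:ℝ) + k*t)^n)) * w^n := by
  have hal : ∀ l : ℕ, 0 < (l:ℝ) + k*t := fun l =>
    add_pos_of_nonneg_of_pos (Nat.cast_nonneg l) hkt
  have hx : ∀ l ∈ Finset.range (k+1), 0 < w * ((l:ℝ) + k*t) ∧ w * ((l:ℝ) + k*t) < 1 := by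
    intro l hl
    rw [Finset.mem_range] at hl
    have h1 : (l:ℝ) ≤ (k:ℝ) := by exact_mod_cast Nat.le_of_lt_succ hl
    constructor
    · exact mul_pos hw (hal l)
    · calc w * ((l:ℝ) + k*t) ≤ w * ((k:ℝ) + k*t) := by
            apply mul_le_mul_of_nonneg_left _ hw.le
            linarith
        _ = ((k:ℝ) + k*t) * w := mul_comm _ _
        _ < 1 := hW
  have hstep : ∀ l ∈ Finset.range (k+1), ((k.choose l : ℕ) : ℝ) * (-1)^l *
        (Real.exp (w * ((l:ℝ) + k*t)) - 1)⁻¹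
      = ((k.choose l : ℕ) : ℝ) * (-1)^l * (w * ((l:ℝ) + k*t))⁻¹
        + ∑' n : ℕ, ((k.choose l : ℕ) : ℝ) * (-1)^l *
            ((bernoulli (n+1) : ℝ)/(n+1)! * (w * ((l:ℝ) + k*t))^n) := by
    intro l hl
    obtain ⟨hx0, hx1⟩ := hx l hl
    rw [psi_repr hx0 hx1, tsum_mul_left, mul_add]
  rw [Finset.sum_congr rfl hstep, Finset.sum_add_distrib]
  congr 1
  rw [← Summable.tsum_finsetSum (fun l hl => by
    have hy : |w * ((l:ℝ) + k*t)| < 1 := by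
      rw [abs_of_pos (hx l hl).1]; exact (hx l hl).2
    exact ((summable_psi_norm hy).of_norm.mul_left _))]
  refine tsum_congr fun n => ?_
  rw [Finset.mul_sum, Finset.sum_mul]
  refine Finset.sum_congr rfl fun l hl => ?_
  rw [mul_pow]
  ring

private lemma D_bound (k : ℕ) (t : ℝ) (hkt : 0 ≤ (k:ℝ) * t) (n : ℕ) :
    |∑ l ∈ Finset.range (k+1), ((k.choose l : ℕ) : ℝ) * (-1)^l * ((l:ℝ) + k*t)^n|
      ≤ 2^k * ((k:ℝ) + k*t)^n := by
  have hA : (0:ℝ) ≤ (k:ℝ) + k*t := by positivity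
  calc |∑ l ∈ Finset.range (k+1), ((k.choose l : ℕ) : ℝ) * (-1)^l * ((l:ℝ) + k*t)^n|
      ≤ ∑ l ∈ Finset.range (k+1), |((k.choose l : ℕ) : ℝ) * (-1)^l * ((l:ℝ) + k*t)^n| :=
        Finset.abs_sum_le_sum_abs _ _
    _ ≤ ∑ l ∈ Finset.range (k+1), ((k.choose l : ℕ) : ℝ) * ((k:ℝ) + k*t)^n := by
        refine Finset.sum_le_sum fun l hl => ?_
        rw [Finset.mem_range] at hl
        have h1 : (l:ℝ) ≤ (k:ℝ) := by exact_mod_cast Nat.le_of_lt_succ hl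
        have h2 : (0:ℝ) ≤ (l:ℝ) + k*t := by positivity
        rw [abs_mul, abs_mul, abs_pow, abs_neg, abs_one, one_pow, mul_one,
          abs_of_nonneg (Nat.cast_nonneg _), abs_pow, abs_of_nonneg h2]
        apply mul_le_mul_of_nonneg_left _ (Nat.cast_nonneg _)
        exact pow_le_pow_left₀ h2 (by linarith) n
    _ = (∑ l ∈ Finset.range (k+1), ((k.choose l : ℕ) : ℝ)) * ((k:ℝ) + k*t)^n := by
        rw [Finset.sum_mul]
    _ = 2^k * ((k:ℝ) + k*t)^n := by
        congr 1
        exact_mod_cast congrArg (Nat.cast : ℕ → ℝ) (Nat.sum_range_choose k)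

set_option maxHeartbeats 2000000 in
private lemma main_est (k : ℕ) (hk : 0 < k) (t : ℝ) (ht : 0 < t) (z : ℝ)
    (hz : z < 0) (hzd : ((k:ℝ) + k*t) * (-z) ≤ 1/2) :
    ‖(∑' m : ℕ+, Real.exp (z * k * m * t) * (1 - Real.exp (z * m)) ^ k) / (-z) ^ k -
        (∑ l ∈ Finset.range (k + 1),
            (Nat.choose k l : ℝ) * (-1) ^ (l + k + 1) / ((l : ℝ) + k * t)) / z ^ (k + 1)
      - -(bernoulli' (k + 1) : ℝ) / (k + 1)‖
    ≤ (2^(k+1) * ((k:ℝ) + k*t)^(k+1)) * (-z) := by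
  have hkr : (0:ℝ) < (k:ℝ) := by exact_mod_cast hk
  have hkt : (0:ℝ) < (k:ℝ) * t := mul_pos hkr ht
  have hw : (0:ℝ) < -z := neg_pos.mpr hz
  set A : ℝ := (k:ℝ) + k*t with hA
  have hA0 : (0:ℝ) < A := by positivity
  have hW1 : A * (-z) < 1 := lt_of_le_of_lt hzd (by norm_num)
  have hAw0 : 0 ≤ A * (-z) := le_of_lt (mul_pos hA0 hw)
  have hzne : z ≠ 0 := ne_of_lt hz
  have hnzne : (-z) ≠ 0 := ne_of_gt hw
  have hal : ∀ l : ℕ, 0 < (l:ℝ) + k*t := fun l =>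
    add_pos_of_nonneg_of_pos (Nat.cast_nonneg l) hkt
  rw [tsum_eval k t z hkt hz, psi_sum k t (-z) hkt hw hW1]
  set S1 : ℝ := ∑ l ∈ Finset.range (k+1), ((k.choose l : ℕ) : ℝ) * (-1)^l * ((-z) * ((l:ℝ) + k*t))⁻¹ with hS1
  set u : ℕ → ℝ := fun n => ((bernoulli (n+1) : ℝ)/(n+1)! *
      (∑ l ∈ Finset.range (k+1), ((k.choose l : ℕ) : ℝ) * (-1)^l * ((l:ℝ) + k*t)^n)) * (-z)^n with hu
  -- Claim 1 : S1 / (-z)^k = Cst / z^(k+1)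
  have hclaim1 : S1 / (-z)^k = (∑ l ∈ Finset.range (k + 1),
      (Nat.choose k l : ℝ) * (-1) ^ (l + k + 1) / ((l : ℝ) + k * t)) / z ^ (k + 1) := by
    rw [div_eq_div_iff (pow_ne_zero _ hnzne) (pow_ne_zero _ hzne), hS1,
      Finset.sum_mul, Finset.sum_mul]
    refine Finset.sum_congr rfl fun l hl => ?_
    have hane : ((l:ℝ) + k*t) ≠ 0 := ne_of_gt (hal l)
    have hz1 : z^(k+1) = (-1:ℝ)^(k+1) * (-z)^(k+1) := by
      rw [← mul_pow]
      norm_num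
    have hpow : (-1:ℝ)^(l+k+1) = (-1)^l * (-1)^(k+1) := pow_add (-1) l (k+1)
    rw [hz1, hpow, mul_inv]
    field_simp
    ring
  -- u vanishes below k
  have hDzero : ∀ n, n < k → (∑ l ∈ Finset.range (k+1),
      ((k.choose l : ℕ) : ℝ) * (-1)^l * ((l:ℝ) + k*t)^n) = 0 := by
    intro n hn
    rw [alt_sum_eq k n ((k:ℝ)*t) hn.le, if_neg hn.ne]
  -- bounds and summability
  have hub : ∀ n : ℕ, ‖u n‖ ≤ 2^k * (A * (-z))^n := by
    intro n
    simp only [hu, Real.norm_eq_abs, abs_mul, abs_pow, abs_neg]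
    rw [abs_of_neg hz, mul_pow]
    have h1 := abs_bser_le (n+1)
    have h2 := D_bound k t hkt.le n
    calc |(bernoulli (n+1) : ℝ)/(n+1)!| * |∑ l ∈ Finset.range (k+1),
          ((k.choose l : ℕ) : ℝ) * (-1)^l * ((l:ℝ) + k*t)^n| * (-z)^n
        ≤ 1 * (2^k * A^n) * (-z)^n := by
          apply mul_le_mul_of_nonneg_right _ (by positivity)
          exact mul_le_mul h1 h2 (abs_nonneg _) zero_le_one
      _ = 2^k * (A^n * (-z)^n) := by ring
  have hgeom : Summable (fun n : ℕ => (2:ℝ)^k * (A * (-z))^n) :=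
    (summable_geometric_of_lt_one hAw0 hW1).mul_left _
  have hu_sum : Summable u :=
    Summable.of_norm (Summable.of_nonneg_of_le (fun n => norm_nonneg _) hub hgeom)
  set v : ℕ → ℝ := fun n => ((bernoulli (n+k+1) : ℝ)/(n+k+1)! *
      (∑ l ∈ Finset.range (k+1), ((k.choose l : ℕ) : ℝ) * (-1)^l * ((l:ℝ) + k*t)^(n+k))) * (-z)^n with hv
  have hvb : ∀ n : ℕ, ‖v n‖ ≤ (2^k * A^k) * (A * (-z))^n := by
    intro n
    simp only [hv, Real.norm_eq_abs, abs_mul, abs_pow, abs_neg]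
    rw [abs_of_neg hz, mul_pow]
    have h1 := abs_bser_le (n+k+1)
    have h2 := D_bound k t hkt.le (n+k)
    calc |(bernoulli (n+k+1) : ℝ)/(n+k+1)!| * |∑ l ∈ Finset.range (k+1),
          ((k.choose l : ℕ) : ℝ) * (-1)^l * ((l:ℝ) + k*t)^(n+k)| * (-z)^n
        ≤ 1 * (2^k * A^(n+k)) * (-z)^n := by
          apply mul_le_mul_of_nonneg_right _ (by positivity)
          exact mul_le_mul h1 h2 (abs_nonneg _) zero_le_one
      _ = (2^k * A^k) * (A^n * (-z)^n) := by rw [pow_add]; ring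
  have hv_sum : Summable v :=
    Summable.of_norm (Summable.of_nonneg_of_le (fun n => norm_nonneg _) hvb
      ((summable_geometric_of_lt_one hAw0 hW1).mul_left _))
  -- tsum u = (-z)^k * tsum v
  have hclaim2 : (∑' n, u n) = (-z)^k * ∑' n, v n := by
    rw [← Summable.sum_add_tsum_nat_add k hu_sum]
    have hhead : ∑ i ∈ Finset.range k, u i = 0 := by
      apply Finset.sum_eq_zero
      intro i hi
      rw [Finset.mem_range] at hi
      simp only [hu]
      rw [hDzero i hi]
      ring
    rw [hhead, zero_add, ← tsum_mul_left]
    refine tsum_congr fun n => ?_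
    simp only [hu, hv]
    rw [pow_add]
    ring
  -- value of v 0
  have hbb : (bernoulli (k+1) : ℝ) = (-1)^(k+1) * (bernoulli' (k+1) : ℝ) := by
    have h := bernoulli'_eq_bernoulli (k+1)
    have h' : ((bernoulli' (k+1) : ℚ) : ℝ) = (-1)^(k+1) * ((bernoulli (k+1) : ℚ) : ℝ) := by
      exact_mod_cast congrArg (fun q : ℚ => (q : ℝ)) h
    rw [h', ← mul_assoc, ← mul_pow]
    norm_num
  have hDk : (∑ l ∈ Finset.range (k+1), ((k.choose l : ℕ) : ℝ) * (-1)^l * ((l:ℝ)+k*t)^k)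
      = (-1)^k * (k ! : ℝ) := by
    rw [alt_sum_eq k k ((k:ℝ)*t) le_rfl, if_pos rfl]
  have hv0 : v 0 = -(bernoulli' (k+1) : ℝ)/((k:ℝ)+1) := by
    simp only [hv, Nat.zero_add, pow_zero, mul_one]
    rw [hDk, hbb]
    have hfac : ((k+1)! : ℝ) = ((k:ℝ)+1) * (k ! : ℝ) := by
      rw [Nat.factorial_succ]
      push_cast
      ring
    have h2 : ((-1:ℝ)^k)*((-1:ℝ)^k) = 1 := by rw [← pow_add, ← two_mul, pow_mul]; norm_num
    rw [hfac, pow_succ]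
    have hkne : ((k:ℝ)+1) ≠ 0 := by positivity
    have hfne : (k ! : ℝ) ≠ 0 := by positivity
    field_simp
    have h3 : ((-1:ℝ))^(k*2) = 1 := by rw [mul_comm, pow_mul]; norm_num
    linear_combination ((bernoulli' (k+1) : ℝ) * (k ! : ℝ)) * h2
      + ((bernoulli' (k+1) : ℝ) * (k ! : ℝ) * (k:ℝ)) * h3
      + (-(bernoulli' (k+1) : ℝ) * (1 + (k ! : ℝ) + (k ! : ℝ) * (k:ℝ))) * h3
  have hsplit : (S1 + ∑' n, u n)/(-z)^k -
      (∑ l ∈ Finset.range (k + 1),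
          (Nat.choose k l : ℝ) * (-1) ^ (l + k + 1) / ((l : ℝ) + k * t)) / z ^ (k + 1)
      - -(bernoulli' (k + 1) : ℝ) / ((k:ℝ) + 1) = ∑' n, v (n+1) := by
    rw [_root_.add_div, hclaim1, hclaim2, mul_div_cancel_left₀ _ (pow_ne_zero k hnzne),
      Summable.tsum_eq_zero_add hv_sum, hv0]
    ring
  rw [hsplit]
  have hnv : Summable (fun n => ‖v n‖) :=
    Summable.of_nonneg_of_le (fun n => norm_nonneg _) hvb
      ((summable_geometric_of_lt_one hAw0 hW1).mul_left _)
  have hvs1 : Summable (fun n => ‖v (n+1)‖) := (summable_nat_add_iff 1).mpr hnv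
  have hgs : Summable (fun n : ℕ => ((2:ℝ)^k * A^k) * ((A*(-z))^(n+1))) := by
    apply ((summable_geometric_of_lt_one hAw0 hW1).mul_left
      ((2:ℝ)^k * A^k * (A*(-z)))).congr
    intro n
    rw [pow_succ]
    ring
  calc ‖∑' n, v (n+1)‖ ≤ ∑' n, ‖v (n+1)‖ := norm_tsum_le_tsum_norm hvs1
    _ ≤ ∑' n : ℕ, ((2:ℝ)^k * A^k) * ((A*(-z))^(n+1)) :=
        Summable.tsum_le_tsum (fun n => hvb (n+1)) hvs1 hgs
    _ = ((2^k * A^k) * (A*(-z))) * ∑' n : ℕ, (A*(-z))^n := by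
        rw [← tsum_mul_left]
        exact tsum_congr fun n => by rw [pow_succ]; ring
    _ = ((2^k * A^k) * (A*(-z))) * (1 - A*(-z))⁻¹ := by
        rw [tsum_geometric_of_lt_one hAw0 hW1]
    _ ≤ ((2^k * A^k) * (A*(-z))) * 2 := by
        apply mul_le_mul_of_nonneg_left _ (by positivity)
        have h12 : (1:ℝ)/2 ≤ 1 - A*(-z) := by linarith
        calc (1 - A*(-z))⁻¹ ≤ ((1:ℝ)/2)⁻¹ := by
              apply inv_anti₀ (by norm_num) h12
          _ = 2 := by norm_num
    _ = (2^(k+1) * A^(k+1)) * (-z) := by rw [pow_succ, pow_succ]; ring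

end AuxPsi

/-- The constant coefficient of the Laurent expansion at `z = 0` of
`ψ^{(t)}(y_{-k})(z) = (-z)^{-k} ∑_{m>0} e^{zkmt}(1-e^{zm})^k`
equals `-B_{k+1}/(k+1)`, independently of `t > 0`: subtracting the single
principal part term `C⁰ₖ(t) z^{-k-1}` and letting `z → 0⁻` yields
`-B_{k+1}/(k+1)`. -/
theorem psi_z0_coefficient (k : ℕ) (hk : 0 < k) (t : ℝ) (ht : 0 < t) :
    Filter.Tendsto
      (fun z : ℝ =>
        (∑' m : ℕ+, Real.exp (z * k * m * t) * (1 - Real.exp (z * m)) ^ k) /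
            (-z) ^ k -
          (∑ l ∈ Finset.range (k + 1),
              (Nat.choose k l : ℝ) * (-1) ^ (l + k + 1) / ((l : ℝ) + k * t)) /
            z ^ (k + 1))
      (nhdsWithin (0 : ℝ) (Set.Iio 0))
      (nhds (-(bernoulli' (k + 1) : ℝ) / (k + 1))) := by
  have hkr : (0:ℝ) < (k:ℝ) := by exact_mod_cast hk
  have hA0 : (0:ℝ) < (k:ℝ) + k*t := by positivity
  rw [← tendsto_sub_nhds_zero_iff]
  apply squeeze_zero_norm' (a := fun z : ℝ => (2^(k+1) * ((k:ℝ) + k*t)^(k+1)) * (-z))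
  · have hδ : (0:ℝ) < 1/(2*((k:ℝ)+k*t)) := by positivity
    filter_upwards [Ioo_mem_nhdsLT_of_mem
      (show (0:ℝ) ∈ Set.Ioc (-(1/(2*((k:ℝ)+k*t)))) 0 from ⟨by linarith, le_refl 0⟩)] with z hz
    obtain ⟨hz1, hz2⟩ := hz
    apply main_est k hk t ht z hz2
    have h1 : -z ≤ 1/(2*((k:ℝ)+k*t)) := by
      linarith
    calc ((k:ℝ)+k*t) * (-z) ≤ ((k:ℝ)+k*t) * (1/(2*((k:ℝ)+k*t))) :=
          mul_le_mul_of_nonneg_left h1 hA0.le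
      _ = 1/2 := by field_simp
  · have h : Filter.Tendsto (fun z : ℝ => (2^(k+1) * ((k:ℝ) + k*t)^(k+1)) * (-z))
        (nhds 0) (nhds ((2^(k+1) * ((k:ℝ) + k*t)^(k+1)) * (-0))) :=
      (continuous_const.mul continuous_neg).tendsto (0:ℝ)
    simpa using h.mono_left nhdsWithin_le_nhds
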